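/- Among partitions of m ≥ 2, the two largest values of ε(λ) = Σ_i binom(λ^(i),2) are achieved precisely at the partitions (m) and (m-1,1): for every partition λ of m other than (m) and (m-1,1), ε(λ) < ε((m-1,1)) < ε((m)). -/
import Mathlib


/-- `ε(λ) = Σ_i binom(λ^(i), 2)` for a partition `λ`. -/
def eps {m : ℕ} (p : Nat.Partition m) : ℕ := (p.parts.map (fun a => a.choose 2)).sum

lemma choose2_succ (n : ℕ) : (n + 1).choose 2 = n.choose 2 + n := by
  rw [Nat.choose_succ_succ n 1, Nat.choose_one_right]
  exact Nat.add_comm n (n.choose 2)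

lemma choose2_add (a b : ℕ) : (a + b).choose 2 = a.choose 2 + b.choose 2 + a * b := by
  induction a with
  | zero => simp
  | succ n ih =>
    have h1 : (n + 1 + b) = (n + b) + 1 := by ring
    rw [h1, choose2_succ, choose2_succ, ih]
    have : (n + 1) * b = n * b + b := by ring
    omega

lemma superadd (s : Multiset ℕ) :
    (s.map (fun a => a.choose 2)).sum ≤ s.sum.choose 2 := by
  induction s using Multiset.induction with
  | empty => simp
  | cons a s ih =>
    simp only [Multiset.map_cons, Multiset.sum_cons, choose2_add]
    omega

lemma sum_eq_zero_multiset (s : Multiset ℕ) (hpos : ∀ x ∈ s, 0 < x) (h : s.sum = 0) :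
    s = 0 := by
  by_cases h0 : s = 0
  · exact h0
  · exfalso
    obtain ⟨a, ha⟩ := Multiset.exists_mem_of_ne_zero h0
    obtain ⟨t, rfl⟩ := Multiset.exists_cons_of_mem ha
    have := hpos a (Multiset.mem_cons_self a t)
    simp [Multiset.sum_cons] at h
    omega

/-- Among partitions of `m ≥ 2`, the two largest values of `ε` are achieved precisely
at `(m)` and `(m-1,1)`: for any other partition `λ`, `ε(λ) < ε((m-1,1)) < ε((m))`. -/
theorem stmt2 (m : ℕ) (hm : 2 ≤ m) (p : Nat.Partition m)
    (h1 : p.parts ≠ {m}) (h2 : p.parts ≠ (m - 1) ::ₘ {1}) :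
    eps p < (m - 1).choose 2 ∧ (m - 1).choose 2 < m.choose 2 := by
  have hsum : p.parts.sum = m := p.parts_sum
  have hsecond : (m - 1).choose 2 < m.choose 2 := by
    have h := choose2_succ (m - 1)
    rw [show m - 1 + 1 = m by omega] at h
    omega
  refine ⟨?_, hsecond⟩
  by_cases hex : ∃ a ∈ p.parts, 2 ≤ a
  · obtain ⟨a, ha, ha2⟩ := hex
    obtain ⟨rest, hrest⟩ := Multiset.exists_cons_of_mem ha
    have hrsum : a + rest.sum = m := by
      rw [← hsum, hrest, Multiset.sum_cons]
    have heps : eps p = a.choose 2 + (rest.map (fun a => a.choose 2)).sum := by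
      rw [eps, hrest, Multiset.map_cons, Multiset.sum_cons]
    have hrpos : ∀ x ∈ rest, 0 < x := by
      intro x hx
      exact p.parts_pos (by rw [hrest]; exact Multiset.mem_cons_of_mem hx)
    rcases Nat.lt_or_ge rest.sum 2 with hlt | hge
    · interval_cases h : rest.sum
      · -- rest.sum = 0, so rest = 0, parts = {a} = {m}
        have h0 : rest = 0 := sum_eq_zero_multiset rest hrpos h
        exact absurd (by rw [hrest, h0]; simp; omega) h1
      · -- rest.sum = 1, so rest = {1}, parts = (m-1) ::ₘ {1}
        have hne : rest ≠ 0 := by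
          intro h0; rw [h0] at h; simp at h
        obtain ⟨b, hb⟩ := Multiset.exists_mem_of_ne_zero hne
        obtain ⟨t, ht⟩ := Multiset.exists_cons_of_mem hb
        have hbpos := hrpos b hb
        have htsum : b + t.sum = 1 := by rw [← h, ht, Multiset.sum_cons]
        have hb1 : b = 1 := by omega
        have ht0 : t = 0 := by
          apply sum_eq_zero_multiset t
          · intro x hx
            exact hrpos x (by rw [ht]; exact Multiset.mem_cons_of_mem hx)
          · omega
        have : p.parts = (m - 1) ::ₘ {1} := by
          rw [hrest, ht, hb1, ht0]
          have : a = m - 1 := by omega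
          rw [this]; rfl
        exact absurd this h2
    · -- rest.sum ≥ 2 and a ≥ 2
      set b := rest.sum with hbdef
      have hbound : eps p ≤ a.choose 2 + b.choose 2 := by
        rw [heps]
        exact Nat.add_le_add_left (superadd rest) _
      have hkey : (m - 1).choose 2 = a.choose 2 + (b - 1).choose 2 + a * (b - 1) := by
        rw [show m - 1 = a + (b - 1) by omega, choose2_add]
      have hb2 : b.choose 2 = (b - 1).choose 2 + (b - 1) := by
        have h := choose2_succ (b - 1)
        rw [show b - 1 + 1 = b by omega] at h
        omega
      have hmul : 2 * (b - 1) ≤ a * (b - 1) := Nat.mul_le_mul_right _ ha2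
      omega
  · -- all parts equal 1
    push_neg at hex
    have hall : ∀ x ∈ p.parts, x = 1 := by
      intro x hx
      have := p.parts_pos hx
      have := hex x hx
      omega
    have heps0 : eps p = 0 := by
      rw [eps]
      apply Multiset.sum_eq_zero
      intro x hx
      obtain ⟨y, hy, rfl⟩ := Multiset.mem_map.mp hx
      rw [hall y hy]
      rfl
    rcases Nat.lt_or_ge m 3 with hm3 | hm3
    · -- m = 2, parts = {1,1}, contradiction with h2
      exfalso
      have hm2 : m = 2 := by omega
      have hcard : p.parts = Multiset.replicate p.parts.card 1 :=
        Multiset.eq_replicate_card.mpr hall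
      have hcard2 : p.parts.card = 2 := by
        have := hsum
        rw [hcard, Multiset.sum_replicate, smul_eq_mul, mul_one] at this
        omega
      apply h2
      rw [hcard, hcard2, hm2]
      rfl
    · rw [heps0]
      exact Nat.choose_pos (by omega)
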